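/- For classical n-party secret sharing with access structure U (an up-set over nonempty subsets of [n]), the pair of diagonal states ρ = ρ(0), σ = ½(ρ(0)+ρ(1)) has relative entropy vector exactly the indicator vector of U: D(ρ^S ‖ σ^S) = 1 for S ∈ U and D(ρ^S ‖ σ^S) = 0 for S ∉ U. -/

import Mathlib

open Matrix Kronecker
open scoped ComplexOrder

/-- Matrix logarithm (base 2) of a Hermitian matrix via its spectral
decomposition, with the convention `log 0 = 0`; junk value `0` on
non-Hermitian input. -/
noncomputable def matLog {ι : Type*} [Fintype ι] [DecidableEq ι]
    (A : Matrix ι ι ℂ) : Matrix ι ι ℂ :=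
  if h : A.IsHermitian then
    (h.eigenvectorUnitary : Matrix ι ι ℂ) *
      Matrix.diagonal (fun i => (Real.logb 2 (h.eigenvalues i) : ℂ)) *
      star (h.eigenvectorUnitary : Matrix ι ι ℂ)
  else 0

/-- Quantum relative entropy `D(ρ‖σ) = tr ρ (log ρ − log σ)` (base-2 logs). -/
noncomputable def relEnt {ι : Type*} [Fintype ι] [DecidableEq ι]
    (ρ σ : Matrix ι ι ℂ) : ℝ :=
  ((ρ * (matLog ρ - matLog σ)).trace).re

/-- Von Neumann entropy `S(ρ) = −tr ρ log ρ` (base-2 log). -/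
noncomputable def vnEnt {ι : Type*} [Fintype ι] [DecidableEq ι]
    (ρ : Matrix ι ι ℂ) : ℝ :=
  -((ρ * matLog ρ).trace).re

/-- `ρ` is a density matrix: positive semidefinite with unit trace. -/
def IsDensity {ι : Type*} [Fintype ι] (ρ : Matrix ι ι ℂ) : Prop :=
  ρ.PosSemidef ∧ ρ.trace = 1

/-- Support inclusion `supp ρ ⊆ supp σ` (for PSD matrices), expressed via
kernel containment: every vector annihilated by `σ` is annihilated by `ρ`. -/
def SuppLE {ι : Type*} [Fintype ι] (ρ σ : Matrix ι ι ℂ) : Prop :=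
  ∀ v : ι → ℂ, σ *ᵥ v = 0 → ρ *ᵥ v = 0

/-- Partial trace of an `n`-party matrix onto the parties in `S`. -/
noncomputable def ptr {n : ℕ} {κ : Fin n → Type*}
    [∀ i, Fintype (κ i)] [∀ i, DecidableEq (κ i)] (S : Finset (Fin n))
    (M : Matrix (∀ i, κ i) (∀ i, κ i) ℂ) :
    Matrix (∀ i : {x : Fin n // x ∈ S}, κ i.1)
           (∀ i : {x : Fin n // x ∈ S}, κ i.1) ℂ :=
  fun a b => ∑ z : ∀ i : {x : Fin n // x ∉ S}, κ i.1,
    M (fun i => if h : i ∈ S then a ⟨i, h⟩ else z ⟨i, h⟩)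
      (fun i => if h : i ∈ S then b ⟨i, h⟩ else z ⟨i, h⟩)

/-- Marginal of a joint probability mass function on the coordinates in `S`. -/
noncomputable def marg {n : ℕ} {κ : Fin n → Type*}
    [∀ i, Fintype (κ i)] [∀ i, DecidableEq (κ i)] (S : Finset (Fin n))
    (P : (∀ i, κ i) → ℝ) : (∀ i : {x : Fin n // x ∈ S}, κ i.1) → ℝ :=
  fun a => ∑ z : ∀ i : {x : Fin n // x ∉ S}, κ i.1,
    P (fun i => if h : i ∈ S then a ⟨i, h⟩ else z ⟨i, h⟩)

lemma matLog_aux {ι : Type*} [Fintype ι] [DecidableEq ι] (d : ι → ℝ) (g : ℝ → ℝ)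
    (h : (Matrix.diagonal fun i => (d i : ℂ)).IsHermitian) :
    (h.eigenvectorUnitary : Matrix ι ι ℂ) *
      Matrix.diagonal (fun i => (g (h.eigenvalues i) : ℂ)) *
      star (h.eigenvectorUnitary : Matrix ι ι ℂ) =
    Matrix.diagonal (fun i => (g (d i) : ℂ)) := by
  set U : Matrix ι ι ℂ := (h.eigenvectorUnitary : Matrix ι ι ℂ) with hU
  have h2 : U * star U = 1 := (Matrix.mem_unitaryGroup_iff).mp (h.eigenvectorUnitary).2
  have h3 : star U * U = 1 := (Matrix.mem_unitaryGroup_iff').mp (h.eigenvectorUnitary).2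
  have hAU : (Matrix.diagonal fun i => (d i : ℂ)) * U =
      U * Matrix.diagonal (fun i => (h.eigenvalues i : ℂ)) := by
    conv_lhs => rw [h.spectral_theorem, Unitary.conjStarAlgAut_apply]
    rw [mul_assoc, mul_assoc, h3, mul_one]
    rfl
  have key : ∀ x j, (d x : ℂ) * U x j = (h.eigenvalues j : ℂ) * U x j := by
    intro x j
    have := congrFun (congrFun hAU x) j
    rwa [Matrix.diagonal_mul, Matrix.mul_diagonal, mul_comm (U x j)] at this
  have key2 : U * Matrix.diagonal (fun i => (g (h.eigenvalues i) : ℂ)) =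
      Matrix.diagonal (fun i => (g (d i) : ℂ)) * U := by
    ext x j
    rw [Matrix.diagonal_mul, Matrix.mul_diagonal]
    by_cases hz : U x j = 0
    · simp [hz]
    · have hd : d x = h.eigenvalues j := by
        have := mul_right_cancel₀ hz (key x j)
        exact_mod_cast this
      rw [hd, mul_comm]
  rw [key2, mul_assoc, h2, mul_one]

lemma matLog_diagonal {ι : Type*} [Fintype ι] [DecidableEq ι] (d : ι → ℝ) :
    matLog (Matrix.diagonal fun i => (d i : ℂ)) =
      Matrix.diagonal fun i => (Real.logb 2 (d i) : ℂ) := by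
  have h : (Matrix.diagonal fun i => (d i : ℂ)).IsHermitian := by
    rw [Matrix.isHermitian_diagonal_iff]
    intro i
    exact Complex.conj_ofReal _
  rw [matLog, dif_pos h]
  exact matLog_aux d (Real.logb 2) h


lemma relEnt_diagonal {ι : Type*} [Fintype ι] [DecidableEq ι] (p q : ι → ℝ) :
    relEnt (Matrix.diagonal fun i => (p i : ℂ)) (Matrix.diagonal fun i => (q i : ℂ)) =
      ∑ i, p i * (Real.logb 2 (p i) - Real.logb 2 (q i)) := by
  rw [relEnt, matLog_diagonal, matLog_diagonal, Matrix.diagonal_sub,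
    Matrix.diagonal_mul_diagonal, Matrix.trace_diagonal]
  push_cast
  rw [Complex.re_sum]
  congr 1; ext i; simp

lemma ptr_diagonal {n : ℕ} {κ : Fin n → Type*}
    [∀ i, Fintype (κ i)] [∀ i, DecidableEq (κ i)] (S : Finset (Fin n))
    (P : (∀ i, κ i) → ℂ) :
    ptr S (Matrix.diagonal P) =
      Matrix.diagonal (fun a => ∑ z : ∀ i : {x : Fin n // x ∉ S}, κ i.1,
        P (fun i => if h : i ∈ S then a ⟨i, h⟩ else z ⟨i, h⟩)) := by
  ext a b
  by_cases hab : a = b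
  · subst hab; simp [ptr, Matrix.diagonal]
  · rw [Matrix.diagonal_apply_ne _ hab, ptr]
    apply Finset.sum_eq_zero
    intro z _
    apply Matrix.diagonal_apply_ne
    intro hc
    apply hab
    funext i
    have := congrFun hc i.1
    simpa [i.2] using this

lemma sum_marg {n : ℕ} {κ : Fin n → Type*}
    [∀ i, Fintype (κ i)] [∀ i, DecidableEq (κ i)] (S : Finset (Fin n))
    (P : (∀ i, κ i) → ℝ) : ∑ a, marg S P a = ∑ x, P x := by
  unfold marg
  rw [← Fintype.sum_prod_type']
  refine (Fintype.sum_equiv (Equiv.piEquivPiSubtypeProd (· ∈ S) κ) _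
    (fun az => P fun i => if h : i ∈ S then az.1 ⟨i, h⟩ else az.2 ⟨i, h⟩) ?_).symm
  intro x
  refine congrArg P (funext fun i => ?_)
  by_cases h : i ∈ S <;> simp [h, Equiv.piEquivPiSubtypeProd]

/-- A classical secret sharing scheme with access structure `U` yields a pair
of diagonal states whose relative entropy vector is exactly the indicator
vector of `U`. -/
theorem secret_sharing_relEnt_vector {n : ℕ} {κ : Fin n → Type*}
    [∀ i, Fintype (κ i)] [∀ i, DecidableEq (κ i)]
    (U : Set (Finset (Fin n))) (hUempty : ∅ ∉ U) (hUne : U.Nonempty)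
    (hUup : ∀ S ∈ U, ∀ T : Finset (Fin n), S ⊆ T → T ∈ U)
    (P₀ P₁ : (∀ i, κ i) → ℝ)
    (hP₀ : ∀ x, 0 ≤ P₀ x) (hP₁ : ∀ x, 0 ≤ P₁ x)
    (hP₀1 : ∑ x, P₀ x = 1) (hP₁1 : ∑ x, P₁ x = 1)
    -- for authorised groups, the supports of the `S`-marginals are disjoint:
    (hauth : ∀ S ∈ U, ∀ a, marg S P₀ a = 0 ∨ marg S P₁ a = 0)
    -- for unauthorised groups, the `S`-marginals coincide:
    (hpriv : ∀ S : Finset (Fin n), S ∉ U → marg S P₀ = marg S P₁) :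
    ∀ S : Finset (Fin n), S.Nonempty →
      (S ∈ U →
        relEnt (ptr S (Matrix.diagonal fun x => (P₀ x : ℂ)))
          (ptr S ((1 / 2 : ℂ) • (Matrix.diagonal (fun x => (P₀ x : ℂ)) +
            Matrix.diagonal fun x => (P₁ x : ℂ)))) = 1) ∧
      (S ∉ U →
        relEnt (ptr S (Matrix.diagonal fun x => (P₀ x : ℂ)))
          (ptr S ((1 / 2 : ℂ) • (Matrix.diagonal (fun x => (P₀ x : ℂ)) +
            Matrix.diagonal fun x => (P₁ x : ℂ)))) = 0) := by
  intro S _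
  have hρ : ptr S (Matrix.diagonal fun x => (P₀ x : ℂ)) =
      Matrix.diagonal fun a => ((marg S P₀ a : ℝ) : ℂ) := by
    rw [ptr_diagonal]
    refine congrArg Matrix.diagonal (funext fun a => ?_)
    simp only [marg]
    push_cast
    rfl
  have hσ : ptr S ((1 / 2 : ℂ) • (Matrix.diagonal (fun x => (P₀ x : ℂ)) +
        Matrix.diagonal fun x => (P₁ x : ℂ))) =
      Matrix.diagonal fun a => (((marg S P₀ a + marg S P₁ a) / 2 : ℝ) : ℂ) := by
    rw [Matrix.diagonal_add, ← Matrix.diagonal_smul, ptr_diagonal]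
    refine congrArg Matrix.diagonal (funext fun a => ?_)
    simp only [marg, Pi.smul_apply, Pi.add_apply, smul_eq_mul]
    push_cast
    rw [← Finset.sum_add_distrib, Finset.sum_div]
    exact Finset.sum_congr rfl fun z _ => by ring
  rw [hρ, hσ, relEnt_diagonal]
  constructor
  · intro hS
    rw [← hP₀1, ← sum_marg S P₀]
    apply Finset.sum_congr rfl
    intro a _
    have hpnn : 0 ≤ marg S P₀ a :=
      Finset.sum_nonneg fun z _ => hP₀ _
    rcases hauth S hS a with h0 | h1
    · simp [h0]
    · by_cases hp : marg S P₀ a = 0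
      · simp [hp]
      · have hp' : (0:ℝ) < marg S P₀ a := lt_of_le_of_ne hpnn (Ne.symm hp)
        rw [h1, add_zero, Real.logb_div hp two_ne_zero,
          Real.logb_self_eq_one (by norm_num)]
        ring
  · intro hS
    rw [← hpriv S hS]
    apply Finset.sum_eq_zero
    intro a _
    have : (marg S P₀ a + marg S P₀ a) / 2 = marg S P₀ a := by ring
    rw [this, sub_self, mul_zero]
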